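/- For any one-bit fingerprinting scheme P on a finite set S, there exist functions x : S → ℝ, y : S → ℝ and d : [0,1] → ℝ such that for all α, β ∈ S and all ε ∈ [0,1]: x(α)·y(β) ≥ d(ε) if and only if P₊(α,β) ≥ 1 − ε. -/

import Mathlib

/-- The acceptance probability of a one-bit fingerprinting scheme. -/
noncomputable def onebitPplus {S : Type*} (p q : S → ℝ) (r00 r01 r10 r11 : ℝ)
    (α β : S) : ℝ :=
  (1 - p α) * (1 - q β) * r00 + (1 - p α) * q β * r01 +
    p α * (1 - q β) * r10 + p α * q β * r11

/-- For any one-bit fingerprinting scheme `P` on a finite set `S`,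
there exist `x y : S → ℝ` and `d : [0,1] → ℝ` such that for all `α β ∈ S` and
`ε ∈ [0,1]`, `x α * y β ≥ d ε ↔ P₊(α,β) ≥ 1 - ε`. -/
theorem onebit_separating_parameters {S : Type*} [Fintype S]
    (p q : S → ℝ) (r00 r01 r10 r11 : ℝ)
    (hp : ∀ σ, p σ ∈ Set.Icc (0 : ℝ) 1) (hq : ∀ σ, q σ ∈ Set.Icc (0 : ℝ) 1)
    (hr00 : r00 ∈ Set.Icc (0 : ℝ) 1) (hr01 : r01 ∈ Set.Icc (0 : ℝ) 1)
    (hr10 : r10 ∈ Set.Icc (0 : ℝ) 1) (hr11 : r11 ∈ Set.Icc (0 : ℝ) 1) :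
    ∃ (x y : S → ℝ) (d : ℝ → ℝ),
      ∀ α β : S, ∀ ε ∈ Set.Icc (0 : ℝ) 1,
        (x α * y β ≥ d ε ↔ onebitPplus p q r00 r01 r10 r11 α β ≥ 1 - ε) := by
  set b : ℝ := r10 - r00 with hb
  set c : ℝ := r01 - r00 with hc
  by_cases he : r11 - r10 - r01 + r00 = 0
  · -- degenerate case: P₊ is additive, use exponentials
    refine ⟨fun α => Real.exp (b * p α), fun β => Real.exp (c * q β),
      fun ε => Real.exp (1 - ε - r00), fun α β ε _ => ?_⟩
    rw [← Real.exp_add]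
    have key : onebitPplus p q r00 r01 r10 r11 α β
        = r00 + b * p α + c * q β := by
      have h11 : r11 = r10 + r01 - r00 := by linarith
      simp only [onebitPplus, hb, hc, h11]; ring
    constructor
    · intro h
      have := Real.exp_le_exp.mp h
      rw [key]; linarith
    · intro h
      rw [key] at h
      exact Real.exp_le_exp.mpr (by linarith)
  · -- nondegenerate case: P₊ factors as a product plus a constant
    set e : ℝ := r11 - r10 - r01 + r00 with hee
    refine ⟨fun α => e * p α + c, fun β => q β + b / e,
      fun ε => 1 - ε - r00 + c * b / e, fun α β ε _ => ?_⟩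
    have key : (e * p α + c) * (q β + b / e) - (1 - ε - r00 + c * b / e)
        = onebitPplus p q r00 r01 r10 r11 α β - (1 - ε) := by
      simp only [onebitPplus, hb, hc, hee]
      field_simp [show r11 - r10 - r01 + r00 ≠ 0 from he]
      ring
    constructor <;> intro h <;> [skip; skip] <;>
      · simp only [ge_iff_le] at h ⊢
        nlinarith [key]
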